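/- Uniform stability of gradient descent on neighboring noise datasets: let X, X′ ∈ ℝ^{n×p} agree in all rows except possibly one, with every row of X and X′ having Euclidean norm at most 1; let ε, ε′ ∈ ℝⁿ agree in all entries except possibly the same index, with all entries bounded in absolute value by V. Let 0 < λ ≤ 1, and let θ^{(t)} and θ′^{(t)} be the gradient descent iterates θ^{(t+1)} = θ^{(t)} + (λ/n) Xᵀ(ε − Xθ^{(t)}) and θ′^{(t+1)} = θ′^{(t)} + (λ/n) X′ᵀ(ε′ − X′θ′^{(t)}), both from initialization 0. If ‖θ′^{(t)}‖ ≤ B for all t < T, then ‖θ^{(T)} − θ′^{(T)}‖ ≤ (2Tλ/n)(V + B). -/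

import Mathlib

lemma gd_contraction {E : Type*} [NormedAddCommGroup E] [InnerProductSpace ℝ E]
    (n : ℕ) (hn : 0 < n) (x : Fin n → E) (hx : ∀ i, ‖x i‖ ≤ 1)
    (lam : ℝ) (hlam0 : 0 < lam) (hlam1 : lam ≤ 1) (v : E) :
    ‖v - (lam / n) • ∑ i, (inner ℝ (x i) v : ℝ) • x i‖ ≤ ‖v‖ := by
  set c : ℝ := lam / n with hc
  have hn' : (0:ℝ) < n := by exact_mod_cast hn
  have hc0 : 0 < c := div_pos hlam0 hn'
  set d : Fin n → ℝ := fun i => (inner ℝ (x i) v : ℝ) with hd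
  set s : E := ∑ i, d i • x i with hs
  have hsnorm : ‖s‖ ≤ ∑ i, |d i| := by
    refine le_trans (norm_sum_le _ _) (Finset.sum_le_sum fun i _ => ?_)
    rw [norm_smul, Real.norm_eq_abs]
    calc |d i| * ‖x i‖ ≤ |d i| * 1 := by
          exact mul_le_mul_of_nonneg_left (hx i) (abs_nonneg _)
      _ = |d i| := mul_one _
  have hcs : (∑ i, |d i|)^2 ≤ (n:ℝ) * ∑ i, d i ^ 2 := by
    have h := sq_sum_le_card_mul_sum_sq (s := (Finset.univ : Finset (Fin n))) (f := fun i => |d i|)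
    simpa [sq_abs] using h
  have hvs : (inner ℝ v s : ℝ) = ∑ i, d i ^ 2 := by
    rw [hs, inner_sum]
    refine Finset.sum_congr rfl fun i _ => ?_
    rw [real_inner_smul_right, real_inner_comm, sq]
  have hsq : ‖v - c • s‖ ^ 2 ≤ ‖v‖ ^ 2 := by
    have hexp : ‖v - c • s‖ ^ 2 = ‖v‖ ^ 2 - 2 * (c * ∑ i, d i ^ 2) + c^2 * ‖s‖^2 := by
      rw [norm_sub_sq_real, real_inner_smul_right, hvs, norm_smul, mul_pow]
      rw [Real.norm_eq_abs, abs_of_pos hc0]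
    have hd2 : (0:ℝ) ≤ ∑ i, d i ^ 2 := Finset.sum_nonneg fun i _ => sq_nonneg _
    have h1 : ‖s‖^2 ≤ (n:ℝ) * ∑ i, d i ^ 2 := by
      calc ‖s‖^2 ≤ (∑ i, |d i|)^2 := by
            apply pow_le_pow_left₀ (norm_nonneg _) hsnorm
        _ ≤ _ := hcs
    have h2 : c^2 * ‖s‖^2 ≤ 2 * (c * ∑ i, d i ^ 2) := by
      calc c^2 * ‖s‖^2 ≤ c^2 * ((n:ℝ) * ∑ i, d i ^ 2) := by
            exact mul_le_mul_of_nonneg_left h1 (sq_nonneg _)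
        _ ≤ 2 * (c * ∑ i, d i ^ 2) := by
            rw [hc]
            have : (lam/n)^2 * ((n:ℝ) * ∑ i, d i ^ 2) = (lam^2/n) * ∑ i, d i ^ 2 := by
              field_simp
            rw [this]
            have hl2 : lam^2/n ≤ lam/n := by
              gcongr
              nlinarith
            have := mul_le_mul_of_nonneg_right hl2 hd2
            calc lam^2/n * ∑ i, d i ^ 2 ≤ lam/n * ∑ i, d i ^ 2 := this
              _ ≤ 2 * (lam/n * ∑ i, d i ^ 2) := by nlinarith [mul_nonneg hc0.le hd2]
    linarith [hexp, h2]
  nlinarith [norm_nonneg (v - c • s), norm_nonneg v, hsq]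

/-- **Uniform stability of gradient descent on neighboring noise datasets.**  Let the two
designs `x, x'` (rows of Euclidean norm at most 1) and noise vectors `ε, ε'` (entries
bounded by `V`) agree except possibly at one index `i₀`. For step size `0 < λ ≤ 1`, the
gradient descent iterates for the variance training from zero initialization satisfy
`‖θ⁽ᵀ⁾ - θ'⁽ᵀ⁾‖ ≤ (2Tλ/n)(V + B)` provided `‖θ'⁽ᵗ⁾‖ ≤ B` for all `t < T`. -/
theorem gd_uniform_stability (n p : ℕ) (hn : 0 < n)
    (x x' : Fin n → EuclideanSpace ℝ (Fin p)) (ε ε' : Fin n → ℝ)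
    (V B lam : ℝ) (hlam0 : 0 < lam) (hlam1 : lam ≤ 1)
    (i₀ : Fin n) (hagree : ∀ i, i ≠ i₀ → x i = x' i ∧ ε i = ε' i)
    (hx : ∀ i, ‖x i‖ ≤ 1) (hx' : ∀ i, ‖x' i‖ ≤ 1)
    (hε : ∀ i, |ε i| ≤ V) (hε' : ∀ i, |ε' i| ≤ V)
    (θ θ' : ℕ → EuclideanSpace ℝ (Fin p))
    (h0 : θ 0 = 0) (h0' : θ' 0 = 0)
    (hrec : ∀ t, θ (t + 1) = θ t +
      (lam / n) • ∑ i, (ε i - (inner ℝ (x i) (θ t) : ℝ)) • x i)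
    (hrec' : ∀ t, θ' (t + 1) = θ' t +
      (lam / n) • ∑ i, (ε' i - (inner ℝ (x' i) (θ' t) : ℝ)) • x' i)
    (T : ℕ) (hB : ∀ t < T, ‖θ' t‖ ≤ B) :
    ‖θ T - θ' T‖ ≤ 2 * T * lam / n * (V + B) := by
  have hn' : (0:ℝ) < n := by exact_mod_cast hn
  set c : ℝ := lam / n with hc
  have hc0 : 0 < c := div_pos hlam0 hn'
  -- one-step bound
  have step : ∀ t, ‖θ' t‖ ≤ B →
      ‖θ (t+1) - θ' (t+1)‖ ≤ ‖θ t - θ' t‖ + c * (2 * (V + B)) := by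
    intro t hBt
    set v : EuclideanSpace ℝ (Fin p) := θ t - θ' t with hv
    set e : EuclideanSpace ℝ (Fin p) :=
      (ε i₀ - (inner ℝ (x i₀) (θ' t) : ℝ)) • x i₀
        - (ε' i₀ - (inner ℝ (x' i₀) (θ' t) : ℝ)) • x' i₀ with he
    have hsum : ∑ i, ((ε i - (inner ℝ (x i) (θ t) : ℝ)) • x i
        - (ε' i - (inner ℝ (x' i) (θ' t) : ℝ)) • x' i
        + (inner ℝ (x i) v : ℝ) • x i) = e := by
      rw [Finset.sum_eq_single i₀]
      · rw [hv, inner_sub_right, he]; module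
      · intro i _ hi
        rw [← (hagree i hi).1, ← (hagree i hi).2, hv, inner_sub_right]
        module
      · simp
    have key : θ (t+1) - θ' (t+1) = (v - c • ∑ i, (inner ℝ (x i) v : ℝ) • x i) + c • e := by
      rw [hrec t, hrec' t, ← hsum]
      rw [Finset.sum_add_distrib, Finset.sum_sub_distrib]
      rw [smul_add, smul_sub, hv]
      abel
    rw [key]
    have h1 : ‖v - c • ∑ i, (inner ℝ (x i) v : ℝ) • x i‖ ≤ ‖v‖ :=
      gd_contraction n hn x hx lam hlam0 hlam1 v
    have hinner : ∀ (y : EuclideanSpace ℝ (Fin p)) (hy : ‖y‖ ≤ 1) (ee : Fin n → ℝ)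
        (hee : ∀ i, |ee i| ≤ V) (i : Fin n),
        |ee i - (inner ℝ y (θ' t) : ℝ)| ≤ V + B := by
      intro y hy ee hee i
      have h2 : |(inner ℝ y (θ' t) : ℝ)| ≤ B := by
        calc |(inner ℝ y (θ' t) : ℝ)| ≤ ‖y‖ * ‖θ' t‖ := abs_real_inner_le_norm _ _
          _ ≤ 1 * B := mul_le_mul hy hBt (norm_nonneg _) zero_le_one
          _ = B := one_mul _
      calc |ee i - (inner ℝ y (θ' t) : ℝ)| ≤ |ee i| + |(inner ℝ y (θ' t) : ℝ)| := abs_sub _ _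
        _ ≤ V + B := add_le_add (hee i) h2
    have h2 : ‖e‖ ≤ 2 * (V + B) := by
      rw [he]
      calc ‖(ε i₀ - (inner ℝ (x i₀) (θ' t) : ℝ)) • x i₀
            - (ε' i₀ - (inner ℝ (x' i₀) (θ' t) : ℝ)) • x' i₀‖
          ≤ ‖(ε i₀ - (inner ℝ (x i₀) (θ' t) : ℝ)) • x i₀‖
            + ‖(ε' i₀ - (inner ℝ (x' i₀) (θ' t) : ℝ)) • x' i₀‖ := norm_sub_le _ _
        _ ≤ |ε i₀ - (inner ℝ (x i₀) (θ' t) : ℝ)| * 1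
            + |ε' i₀ - (inner ℝ (x' i₀) (θ' t) : ℝ)| * 1 := by
            rw [norm_smul, norm_smul, Real.norm_eq_abs, Real.norm_eq_abs]
            exact add_le_add
              (mul_le_mul_of_nonneg_left (hx i₀) (abs_nonneg _))
              (mul_le_mul_of_nonneg_left (hx' i₀) (abs_nonneg _))
        _ ≤ (V + B) * 1 + (V + B) * 1 := by
            exact add_le_add
              (mul_le_mul_of_nonneg_right (hinner (x i₀) (hx i₀) ε hε i₀) zero_le_one)
              (mul_le_mul_of_nonneg_right (hinner (x' i₀) (hx' i₀) ε' hε' i₀) zero_le_one)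
        _ = 2 * (V + B) := by ring
    calc ‖(v - c • ∑ i, (inner ℝ (x i) v : ℝ) • x i) + c • e‖
        ≤ ‖v - c • ∑ i, (inner ℝ (x i) v : ℝ) • x i‖ + ‖c • e‖ := norm_add_le _ _
      _ ≤ ‖v‖ + c * (2 * (V + B)) := by
          rw [norm_smul, Real.norm_eq_abs, abs_of_pos hc0]
          exact add_le_add h1 (mul_le_mul_of_nonneg_left h2 hc0.le)
  -- induction
  clear hrec hrec'
  induction T with
  | zero => simp [h0, h0']
  | succ T ih =>
    have hBT : ∀ t < T, ‖θ' t‖ ≤ B := fun t ht => hB t (ht.trans (Nat.lt_succ_self T))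
    have ihT := ih hBT
    have hstep := step T (hB T (Nat.lt_succ_self T))
    have : ‖θ (T+1) - θ' (T+1)‖ ≤ 2 * T * lam / n * (V + B) + c * (2 * (V + B)) :=
      hstep.trans (by linarith)
    refine this.trans (le_of_eq ?_)
    rw [hc]
    push_cast
    field_simp
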